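/- For every integer n ≥ 1 and every p ∈ I_n, one has w_{p,1} = 1 − (p_n + p_n') h_{p,0} > 0 and the one-block identity M1^{p_n} M3^{p_n'} M2^{q_n} · (s_{T(p)}, h_{T(p),0}, 1 − s_{T(p)})ᵀ = (1/w_{p,1}) · (s_p, h_{p,0}, 1 − s_p)ᵀ, where T(p) ∈ I_n is the shift of p. -/

import Mathlib

open Matrix

noncomputable section

/-- `M1 = [[1,1,0],[0,1,0],[0,0,1]]`. -/
def M1 : Matrix (Fin 3) (Fin 3) ℝ := !![1, 1, 0; 0, 1, 0; 0, 0, 1]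

/-- `M2 = [[1,0,0],[1,1,1],[0,0,1]]`. -/
def M2 : Matrix (Fin 3) (Fin 3) ℝ := !![1, 0, 0; 1, 1, 1; 0, 0, 1]

/-- `M3 = [[1,0,0],[0,1,0],[0,1,1]]`. -/
def M3 : Matrix (Fin 3) (Fin 3) ℝ := !![1, 0, 0; 0, 1, 0; 0, 1, 1]

/- A tuple `p = (p_n, p_n', q_n, …, p_1, p_1', q_1) ∈ ℕ₀^{3n}` is encoded by three
functions `P P' Q : Fin n → ℕ`, where the index `i : Fin n` corresponds to the
subscript `i + 1` (so `P ⟨0,_⟩ = p_1`, …, `P ⟨n-1,_⟩ = p_n`). -/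

/-- The transition matrix `M_p = M1^{p_n} M3^{p_n'} M2^{q_n} ⋯ M1^{p_1} M3^{p_1'} M2^{q_1}`. -/
def Mp (n : ℕ) (P P' Q : Fin n → ℕ) : Matrix (Fin 3) (Fin 3) ℝ :=
  ((List.finRange n).map fun i => M1 ^ P i.rev * M3 ^ P' i.rev * M2 ^ Q i.rev).prod

/-- Membership of the tuple `p` in `I_n`. -/
def memI (n : ℕ) (P P' Q : Fin n → ℕ) : Prop :=
  (∀ i, 0 < Q i) ∧ (∀ i, 0 < P i + P' i) ∧ (∃ j, 0 < P j) ∧ (∃ k, 0 < P' k)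

/-- Finite continued fraction: `cf [a₁, …, a_m] x = 1/(a₁ + 1/(a₂ + ⋯ + 1/(a_m + x)))`. -/
def cf (l : List ℕ) (x : ℝ) : ℝ := l.foldr (fun a y => 1 / (a + y)) x

/-- The (0-indexed) block index `k(j+1) - 1 = n - 1 - (j mod n)` used at step `j + 1`. -/
def blk (n : ℕ) (hn : 0 < n) (j : ℕ) : Fin n :=
  ⟨n - 1 - j % n, lt_of_le_of_lt (Nat.sub_le _ _) (Nat.sub_lt hn one_pos)⟩

/-- The sequence `(a₁, …, a_{2n}) = (p_n + p_n', q_n, …, p_1 + p_1', q_1)` as a list. -/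
def aList (n : ℕ) (hn : 0 < n) (P P' Q : Fin n → ℕ) : List ℕ :=
  (List.range n).flatMap fun i => [P (blk n hn i) + P' (blk n hn i), Q (blk n hn i)]

/-- `isH0 n hn P P' Q h0` says that `h0` is the number `h_{p,0}`: a real number in `(0,1)`
that is a fixed point of `x ↦ 1/(a₁ + 1/(a₂ + ⋯ + 1/(a_{2n} + x)))` (there is exactly one). -/
def isH0 (n : ℕ) (hn : 0 < n) (P P' Q : Fin n → ℕ) (h0 : ℝ) : Prop :=
  h0 ∈ Set.Ioo (0 : ℝ) 1 ∧ cf (aList n hn P P' Q) h0 = h0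

/-- The pair `(w_{p,j}, h_{p,j})`, with `w_{p,0} = 1`, `h_{p,0} = h0`, and for `j ≥ 1`:
`w_{p,j} = w_{p,j-1} − (p_{k(j)} + p'_{k(j)}) h_{p,j-1}`, `h_{p,j} = h_{p,j-1} − q_{k(j)} w_{p,j}`. -/
def wh (n : ℕ) (hn : 0 < n) (P P' Q : Fin n → ℕ) (h0 : ℝ) : ℕ → ℝ × ℝ
  | 0 => (1, h0)
  | j + 1 =>
    let prev := wh n hn P P' Q h0 j
    let b := blk n hn j
    let w := prev.1 - ((P b : ℝ) + (P' b : ℝ)) * prev.2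
    (w, prev.2 - (Q b : ℝ) * w)

/-- The width `w_{p,j}`. -/
def wseq (n : ℕ) (hn : 0 < n) (P P' Q : Fin n → ℕ) (h0 : ℝ) (j : ℕ) : ℝ :=
  (wh n hn P P' Q h0 j).1

/-- The height `h_{p,j}`. -/
def hseq (n : ℕ) (hn : 0 < n) (P P' Q : Fin n → ℕ) (h0 : ℝ) (j : ℕ) : ℝ :=
  (wh n hn P P' Q h0 j).2

/-- The split ratio `s_p = Σ_{i=0}^∞ p_{k(i+1)} h_{p,i}`. -/
def splitRatio (n : ℕ) (hn : 0 < n) (P P' Q : Fin n → ℕ) (h0 : ℝ) : ℝ :=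
  ∑' i : ℕ, (P (blk n hn i) : ℝ) * hseq n hn P P' Q h0 i

/-- The reindexing realizing the shift `T`: the tuple `T(p)` is given by the functions
`P ∘ shiftIdx n hn`, `P' ∘ shiftIdx n hn`, `Q ∘ shiftIdx n hn`. -/
def shiftIdx (n : ℕ) (hn : 0 < n) (i : Fin n) : Fin n :=
  ⟨(i.val + (n - 1)) % n, Nat.mod_lt _ hn⟩

lemma cf_nil (x : ℝ) : cf [] x = x := rfl

lemma cf_cons (a : ℕ) (t : List ℕ) (x : ℝ) : cf (a :: t) x = 1 / (a + cf t x) := rfl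

lemma cf_append (l1 l2 : List ℕ) (x : ℝ) : cf (l1 ++ l2) x = cf l1 (cf l2 x) := by
  simp [cf, List.foldr_append]

lemma cf_pos : ∀ (l : List ℕ), (∀ a ∈ l, 1 ≤ a) → ∀ x : ℝ, 0 < x → 0 < cf l x
  | [], _, x, hx => hx
  | a :: t, h, x, hx => by
    have ht := cf_pos t (fun b hb => h b (List.mem_cons_of_mem _ hb)) x hx
    have ha : (1:ℝ) ≤ a := by exact_mod_cast h a List.mem_cons_self
    rw [cf_cons]
    have : (0:ℝ) < a + cf t x := by linarith
    positivity

lemma cf_lt_one (a : ℕ) (t : List ℕ) (x : ℝ) (ha : 1 ≤ a) (ht : 0 < cf t x) :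
    cf (a :: t) x < 1 := by
  rw [cf_cons]
  have ha' : (1:ℝ) ≤ a := by exact_mod_cast ha
  rw [div_lt_one (by linarith)]
  linarith

lemma cf_lip : ∀ (l : List ℕ), (∀ a ∈ l, 1 ≤ a) → ∀ x y : ℝ, 0 < x → 0 < y →
    |cf l x - cf l y| ≤ |x - y|
  | [], _, x, y, _, _ => le_refl _
  | a :: t, h, x, y, hx, hy => by
    have hmem := fun b hb => h b (List.mem_cons_of_mem _ hb)
    have hu := cf_pos t hmem x hx
    have hv := cf_pos t hmem y hy
    have ih := cf_lip t hmem x y hx hy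
    have ha : (1:ℝ) ≤ a := by exact_mod_cast h a List.mem_cons_self
    rw [cf_cons, cf_cons]
    set u := cf t x
    set v := cf t y
    have hau : (1:ℝ) < a + u := by linarith
    have hav : (1:ℝ) < a + v := by linarith
    have key : 1 / (↑a + u) - 1 / (↑a + v) = (v - u) / ((a + u) * (a + v)) := by
      field_simp; ring
    rw [key, abs_div]
    have hden : 1 ≤ |(↑a + u) * (↑a + v)| := by
      rw [abs_of_pos (by positivity)]
      nlinarith
    calc |v - u| / |(↑a + u) * (↑a + v)| ≤ |v - u| := div_le_self (abs_nonneg _) hden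
      _ = |u - v| := abs_sub_comm _ _
      _ ≤ |x - y| := ih

lemma cf_contract (l : List ℕ) (hne : l ≠ []) (h : ∀ a ∈ l, 1 ≤ a) (x y : ℝ)
    (hx : 0 < x) (hy : 0 < y) (hxy : x ≠ y) : |cf l x - cf l y| < |x - y| := by
  obtain ⟨a, t, rfl⟩ := List.exists_cons_of_ne_nil hne
  have hmem := fun b hb => h b (List.mem_cons_of_mem _ hb)
  have hu := cf_pos t hmem x hx
  have hv := cf_pos t hmem y hy
  have ha : (1:ℝ) ≤ a := by exact_mod_cast h a List.mem_cons_self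
  have hxyabs : 0 < |x - y| := abs_pos.mpr (sub_ne_zero.mpr hxy)
  rw [cf_cons, cf_cons]
  set u := cf t x
  set v := cf t y
  by_cases huv : u = v
  · simp [huv, hxyabs]
  · have hau : (1:ℝ) < a + u := by linarith
    have hav : (1:ℝ) < a + v := by linarith
    have key : 1 / (↑a + u) - 1 / (↑a + v) = (v - u) / ((a + u) * (a + v)) := by
      field_simp; ring
    rw [key, abs_div]
    have hden : 1 < |(↑a + u) * (↑a + v)| := by
      rw [abs_of_pos (by positivity)]
      nlinarith
    have huvabs : 0 < |v - u| := abs_pos.mpr (sub_ne_zero.mpr (Ne.symm huv))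
    calc |v - u| / |(↑a + u) * (↑a + v)| < |v - u| := div_lt_self huvabs hden
      _ = |u - v| := abs_sub_comm _ _
      _ ≤ |x - y| := cf_lip t hmem x y hx hy

lemma cf_fixed_unique (l : List ℕ) (hne : l ≠ []) (h : ∀ a ∈ l, 1 ≤ a) {x y : ℝ}
    (hx : 0 < x) (hy : 0 < y) (hfx : cf l x = x) (hfy : cf l y = y) : x = y := by
  by_contra hxy
  have := cf_contract l hne h x y hx hy hxy
  rw [hfx, hfy] at this
  exact lt_irrefl _ this

lemma cf_Ioo (l : List ℕ) (h : ∀ a ∈ l, 1 ≤ a) (x : ℝ) (hx : x ∈ Set.Ioo (0:ℝ) 1) :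
    cf l x ∈ Set.Ioo (0:ℝ) 1 := by
  rcases l with _ | ⟨a, t⟩
  · exact hx
  · refine ⟨cf_pos _ h x hx.1, cf_lt_one a t x (h a List.mem_cons_self)
      (cf_pos t (fun b hb => h b (List.mem_cons_of_mem _ hb)) x hx.1)⟩

lemma blk_n (n : ℕ) (hn : 0 < n) : blk n hn n = blk n hn 0 := by
  simp [blk, Nat.mod_self]

lemma shiftIdx_blk (n : ℕ) (hn : 0 < n) (j : ℕ) :
    shiftIdx n hn (blk n hn j) = blk n hn (j + 1) := by
  apply Fin.ext
  simp only [shiftIdx, blk]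
  have hr : j % n < n := Nat.mod_lt _ hn
  have h1 : (j + 1) % n = (j % n + 1) % n := ((Nat.mod_modEq j n).add_right 1).symm
  rcases eq_or_lt_of_le (Nat.succ_le_of_lt hr) with he | hlt
  · have hjn : j % n = n - 1 := by omega
    rw [h1, hjn, show (n - 1 + 1) = n by omega, Nat.mod_self]
    rw [show n - 1 - (n-1) + (n - 1) = n - 1 by omega, Nat.mod_eq_of_lt (by omega)]
    omega
  · rw [h1, Nat.mod_eq_of_lt hlt]
    rw [show n - 1 - j % n + (n - 1) = n + (n - 1 - (j % n + 1)) by omega,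
      Nat.add_mod_left, Nat.mod_eq_of_lt (by omega)]

lemma shiftIdx_surj (n : ℕ) (hn : 0 < n) (j : Fin n) :
    shiftIdx n hn ⟨(j.val + 1) % n, Nat.mod_lt _ hn⟩ = j := by
  apply Fin.ext
  simp only [shiftIdx]
  rw [show ((j.val + 1) % n + (n-1)) % n = (j.val + 1 + (n-1)) % n from
    (Nat.mod_modEq (j.val+1) n).add_right (n-1),
    show j.val + 1 + (n - 1) = j.val + n by omega, Nat.add_mod_right,
    Nat.mod_eq_of_lt j.isLt]

lemma memI_shift (n : ℕ) (hn : 0 < n) (P P' Q : Fin n → ℕ) (hI : memI n P P' Q) :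
    memI n (P ∘ shiftIdx n hn) (P' ∘ shiftIdx n hn) (Q ∘ shiftIdx n hn) := by
  obtain ⟨hQ, hPP, ⟨j, hj⟩, ⟨k, hk⟩⟩ := hI
  refine ⟨fun i => hQ _, fun i => hPP _, ⟨⟨(j.val+1)%n, Nat.mod_lt _ hn⟩, ?_⟩,
    ⟨⟨(k.val+1)%n, Nat.mod_lt _ hn⟩, ?_⟩⟩
  · simpa [Function.comp, shiftIdx_surj] using hj
  · simpa [Function.comp, shiftIdx_surj] using hk

lemma aList_decomp (n : ℕ) (hn : 0 < n) (P P' Q : Fin n → ℕ) :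
    aList n hn P P' Q
      = [P (blk n hn 0) + P' (blk n hn 0), Q (blk n hn 0)]
        ++ (List.range (n-1)).flatMap
            (fun i => [P (blk n hn (i+1)) + P' (blk n hn (i+1)), Q (blk n hn (i+1))]) := by
  rcases n with _ | m
  · omega
  · unfold aList
    rw [List.range_succ_eq_map]
    simp [List.flatMap_cons, List.flatMap_map, Function.comp]

lemma aList_shift (n : ℕ) (hn : 0 < n) (P P' Q : Fin n → ℕ) :
    aList n hn (P ∘ shiftIdx n hn) (P' ∘ shiftIdx n hn) (Q ∘ shiftIdx n hn)
      = (List.range (n-1)).flatMap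
            (fun i => [P (blk n hn (i+1)) + P' (blk n hn (i+1)), Q (blk n hn (i+1))])
        ++ [P (blk n hn 0) + P' (blk n hn 0), Q (blk n hn 0)] := by
  have hfun : ∀ i : ℕ,
      [(P ∘ shiftIdx n hn) (blk n hn i) + (P' ∘ shiftIdx n hn) (blk n hn i),
        (Q ∘ shiftIdx n hn) (blk n hn i)]
      = [P (blk n hn (i+1)) + P' (blk n hn (i+1)), Q (blk n hn (i+1))] := by
    intro i; simp [Function.comp, shiftIdx_blk]
  rcases n with _ | m
  · omega
  · unfold aList
    simp only [hfun]
    rw [List.range_succ, List.flatMap_append]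
    simp only [List.flatMap_cons, List.flatMap_nil, List.append_nil, Nat.succ_sub_one]
    congr 1
    rw [blk_n (m+1) hn]

lemma aList_entries (n : ℕ) (hn : 0 < n) (P P' Q : Fin n → ℕ) (hI : memI n P P' Q) :
    ∀ a ∈ aList n hn P P' Q, 1 ≤ a := by
  intro a ha
  unfold aList at ha
  simp only [List.mem_flatMap, List.mem_range, List.mem_cons, List.mem_singleton] at ha
  obtain ⟨i, -, h | h | h⟩ := ha
  · subst h; exact hI.2.1 _
  · subst h; exact hI.1 _
  · exact absurd h (by simp)

lemma aList_ne_nil (n : ℕ) (hn : 0 < n) (P P' Q : Fin n → ℕ) :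
    aList n hn P P' Q ≠ [] := by
  rw [aList_decomp n hn P P' Q]
  simp

lemma one_step (n : ℕ) (hn : 0 < n) (P P' Q : Fin n → ℕ) (hI : memI n P P' Q)
    (h0 : ℝ) (hh0 : isH0 n hn P P' Q h0) :
    ∃ y : ℝ,
      isH0 n hn (P ∘ shiftIdx n hn) (P' ∘ shiftIdx n hn) (Q ∘ shiftIdx n hn) y ∧
      0 < wseq n hn P P' Q h0 1 ∧
      hseq n hn P P' Q h0 1 = wseq n hn P P' Q h0 1 * y ∧
      2 * hseq n hn P P' Q h0 1 ≤ h0 := by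
  obtain ⟨hIoo, hfix⟩ := hh0
  obtain ⟨h0pos, h0lt⟩ := hIoo
  set b0 := blk n hn 0 with hb0
  set rest := (List.range (n-1)).flatMap
      (fun i => [P (blk n hn (i+1)) + P' (blk n hn (i+1)), Q (blk n hn (i+1))]) with hrest
  have hent := aList_entries n hn P P' Q hI
  have hdec := aList_decomp n hn P P' Q
  have hentrest : ∀ a ∈ rest, 1 ≤ a := by
    intro a ha
    exact hent a (by rw [hdec]; exact List.mem_append_right _ ha)
  set y := cf rest h0 with hy
  have hyIoo : y ∈ Set.Ioo (0:ℝ) 1 := cf_Ioo rest hentrest h0 ⟨h0pos, h0lt⟩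
  have hkey : cf [P b0 + P' b0, Q b0] y = h0 := by
    rw [hy, ← cf_append, ← hdec, hfix]
  have hq : (1:ℝ) ≤ (Q b0 : ℝ) := by exact_mod_cast hI.1 b0
  have hc : (1:ℝ) ≤ ((P b0 + P' b0 : ℕ) : ℝ) := by exact_mod_cast hI.2.1 b0
  -- unfold the two-term continued fraction
  have hqy : (0:ℝ) < (Q b0 : ℝ) + y := by linarith [hyIoo.1]
  have hexp : h0 = 1 / (((P b0 + P' b0 : ℕ) : ℝ) + 1 / ((Q b0 : ℝ) + y)) := by
    rw [← hkey, cf_cons, cf_cons, cf_nil]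
  set z : ℝ := 1 / ((Q b0 : ℝ) + y) with hz
  have hzpos : 0 < z := by positivity
  have hcz : (0:ℝ) < ((P b0 + P' b0 : ℕ) : ℝ) + z := by linarith
  have hprod : h0 * (((P b0 + P' b0 : ℕ) : ℝ) + z) = 1 := by
    rw [hexp]; field_simp
  have hzqy : z * ((Q b0 : ℝ) + y) = 1 := by
    rw [hz]; field_simp
  have hw1 : wseq n hn P P' Q h0 1 = 1 - ((P b0 : ℝ) + (P' b0 : ℝ)) * h0 := by
    simp [wseq, wh, hb0]
  have hcast : ((P b0 + P' b0 : ℕ) : ℝ) = (P b0 : ℝ) + (P' b0 : ℝ) := by push_cast; ring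
  have hw1z : wseq n hn P P' Q h0 1 = h0 * z := by
    rw [hw1, ← hcast]; nlinarith [hprod]
  have hw1pos : 0 < wseq n hn P P' Q h0 1 := by rw [hw1z]; positivity
  have hh1 : hseq n hn P P' Q h0 1 = h0 - (Q b0 : ℝ) * wseq n hn P P' Q h0 1 := by
    simp [hseq, wseq, wh, hb0]
  have hh1y : hseq n hn P P' Q h0 1 = wseq n hn P P' Q h0 1 * y := by
    rw [hh1, hw1z]; nlinarith [hzqy]
  refine ⟨y, ⟨hyIoo, ?_⟩, hw1pos, hh1y, ?_⟩
  · rw [aList_shift n hn P P' Q, cf_append, ← hrest, ← hb0, hkey, ← hy]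
  · rw [hh1y, hw1z]
    have hyq : y ≤ (Q b0 : ℝ) := le_trans (le_of_lt hyIoo.2) hq
    have h2zy : 2 * (z * y) ≤ 1 := by
      have := mul_le_mul_of_nonneg_left hyq hzpos.le
      linarith [hzqy, this]
    have hfin := mul_le_mul_of_nonneg_left h2zy h0pos.le
    linarith [hfin]

lemma wh_shift (n : ℕ) (hn : 0 < n) (P P' Q : Fin n → ℕ) (h0 y : ℝ)
    (hw1 : wseq n hn P P' Q h0 1 ≠ 0)
    (hy : hseq n hn P P' Q h0 1 = wseq n hn P P' Q h0 1 * y) :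
    ∀ j, wh n hn (P ∘ shiftIdx n hn) (P' ∘ shiftIdx n hn) (Q ∘ shiftIdx n hn) y j
      = (wseq n hn P P' Q h0 (j+1) / wseq n hn P P' Q h0 1,
         hseq n hn P P' Q h0 (j+1) / wseq n hn P P' Q h0 1)
  | 0 => by
    simp only [wh]
    rw [hy, div_self hw1, mul_comm, mul_div_assoc, div_self hw1, mul_one]
  | j + 1 => by
    have ih := wh_shift n hn P P' Q h0 y hw1 hy j
    simp only [wh, ih]
    have hb : ∀ f : Fin n → ℕ, (f ∘ shiftIdx n hn) (blk n hn j) = f (blk n hn (j+1)) := by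
      intro f; simp [Function.comp, shiftIdx_blk]
    rw [hb P, hb P', hb Q]
    have hwdef : wseq n hn P P' Q h0 (j+2)
        = wseq n hn P P' Q h0 (j+1)
          - ((P (blk n hn (j+1)) : ℝ) + (P' (blk n hn (j+1)) : ℝ)) * hseq n hn P P' Q h0 (j+1) := by
      simp [wseq, hseq, wh]
    have hhdef : hseq n hn P P' Q h0 (j+2)
        = hseq n hn P P' Q h0 (j+1) - (Q (blk n hn (j+1)) : ℝ) * wseq n hn P P' Q h0 (j+2) := by
      simp [wseq, hseq, wh]
    apply Prod.ext <;> simp only [hwdef, hhdef] <;> field_simp <;> ring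

lemma decay : ∀ (j : ℕ) (n : ℕ) (hn : 0 < n) (P P' Q : Fin n → ℕ), memI n P P' Q →
    ∀ h0 : ℝ, isH0 n hn P P' Q h0 →
    0 < wseq n hn P P' Q h0 (j+1) ∧ 0 < hseq n hn P P' Q h0 (j+1) ∧
      2 * hseq n hn P P' Q h0 (j+1) ≤ hseq n hn P P' Q h0 j
  | 0, n, hn, P, P', Q, hI, h0, hh0 => by
    obtain ⟨y, hyH0, hw1pos, hh1y, h2⟩ := one_step n hn P P' Q hI h0 hh0
    refine ⟨hw1pos, ?_, ?_⟩
    · rw [hh1y]; exact mul_pos hw1pos hyH0.1.1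
    · simpa [hseq, wh] using h2
  | j + 1, n, hn, P, P', Q, hI, h0, hh0 => by
    obtain ⟨y, hyH0, hw1pos, hh1y, -⟩ := one_step n hn P P' Q hI h0 hh0
    have hw1 := ne_of_gt hw1pos
    have hs := wh_shift n hn P P' Q h0 y hw1 hh1y
    obtain ⟨ihw, ihh, ihle⟩ := decay j n hn (P ∘ shiftIdx n hn) (P' ∘ shiftIdx n hn)
      (Q ∘ shiftIdx n hn) (memI_shift n hn P P' Q hI) y hyH0
    have hws : ∀ m, wseq n hn (P ∘ shiftIdx n hn) (P' ∘ shiftIdx n hn) (Q ∘ shiftIdx n hn) y m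
        = wseq n hn P P' Q h0 (m+1) / wseq n hn P P' Q h0 1 := fun m => by
      simp [wseq, hs m]
    have hhs : ∀ m, hseq n hn (P ∘ shiftIdx n hn) (P' ∘ shiftIdx n hn) (Q ∘ shiftIdx n hn) y m
        = hseq n hn P P' Q h0 (m+1) / wseq n hn P P' Q h0 1 := fun m => by
      simp [hseq, hs m]
    simp only [hws, hhs] at ihw ihh ihle
    refine ⟨?_, ?_, ?_⟩
    · have := mul_pos ihw hw1pos; rwa [div_mul_cancel₀ _ hw1] at this
    · have := mul_pos ihh hw1pos; rwa [div_mul_cancel₀ _ hw1] at this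
    · rw [← mul_div_assoc, div_le_div_iff₀ hw1pos hw1pos] at ihle
      exact le_of_mul_le_mul_right ihle hw1pos

lemma hseq_pos (n : ℕ) (hn : 0 < n) (P P' Q : Fin n → ℕ) (hI : memI n P P' Q)
    (h0 : ℝ) (hh0 : isH0 n hn P P' Q h0) (j : ℕ) : 0 < hseq n hn P P' Q h0 j := by
  rcases j with _ | j
  · exact hh0.1.1
  · exact (decay j n hn P P' Q hI h0 hh0).2.1

lemma hseq_le (n : ℕ) (hn : 0 < n) (P P' Q : Fin n → ℕ) (hI : memI n P P' Q)
    (h0 : ℝ) (hh0 : isH0 n hn P P' Q h0) :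
    ∀ j, hseq n hn P P' Q h0 j ≤ h0 / 2 ^ j
  | 0 => by simp [hseq, wh]
  | j + 1 => by
    have ih := hseq_le n hn P P' Q hI h0 hh0 j
    have h2 := (decay j n hn P P' Q hI h0 hh0).2.2
    rw [pow_succ]
    rw [show h0 / (2 ^ j * 2) = h0 / 2 ^ j / 2 by ring]
    linarith

lemma summable_split (n : ℕ) (hn : 0 < n) (P P' Q : Fin n → ℕ) (hI : memI n P P' Q)
    (h0 : ℝ) (hh0 : isH0 n hn P P' Q h0) :
    Summable (fun j => (P (blk n hn j) : ℝ) * hseq n hn P P' Q h0 j) := by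
  set B : ℕ := Finset.univ.sup P with hB
  have hg : Summable (fun j : ℕ => ((B : ℝ) * h0) * (1/2) ^ j) :=
    (summable_geometric_of_lt_one (by norm_num) (by norm_num)).mul_left _
  apply Summable.of_nonneg_of_le _ _ hg
  · intro j
    exact mul_nonneg (Nat.cast_nonneg _) (hseq_pos n hn P P' Q hI h0 hh0 j).le
  · intro j
    have h1 : (P (blk n hn j) : ℝ) ≤ (B : ℝ) := by
      exact_mod_cast Nat.cast_le.mpr (Finset.le_sup (Finset.mem_univ (blk n hn j)))
    have h2 := hseq_le n hn P P' Q hI h0 hh0 j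
    have h3 := (hseq_pos n hn P P' Q hI h0 hh0 j).le
    calc (P (blk n hn j) : ℝ) * hseq n hn P P' Q h0 j
        ≤ (B : ℝ) * (h0 / 2 ^ j) := by
          apply mul_le_mul h1 h2 h3 (Nat.cast_nonneg _)
      _ = ((B:ℝ) * h0) * (1/2) ^ j := by
          rw [div_pow, one_pow]; ring

lemma blk_zero (n : ℕ) (hn : 0 < n) : blk n hn 0 = ⟨n - 1, Nat.sub_lt hn one_pos⟩ := by
  apply Fin.ext; simp [blk]

lemma M1_pow (a : ℕ) : M1 ^ a = !![1, (a:ℝ), 0; 0, 1, 0; 0, 0, 1] := by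
  induction a with
  | zero => simp [Matrix.one_fin_three]
  | succ a ih =>
    rw [pow_succ, ih, M1]
    rw [show ((a+1 : ℕ) : ℝ) = (a:ℝ) + 1 by push_cast; ring]
    ext i j
    fin_cases i <;> fin_cases j <;>
      simp [Matrix.mul_apply, Fin.sum_univ_three, Matrix.vecHead, Matrix.vecTail] <;> ring

lemma M2_pow (q : ℕ) : M2 ^ q = !![1, 0, 0; (q:ℝ), 1, (q:ℝ); 0, 0, 1] := by
  induction q with
  | zero => simp [Matrix.one_fin_three]
  | succ q ih =>
    rw [pow_succ, ih, M2]
    rw [show ((q+1 : ℕ) : ℝ) = (q:ℝ) + 1 by push_cast; ring]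
    ext i j
    fin_cases i <;> fin_cases j <;>
      simp [Matrix.mul_apply, Fin.sum_univ_three, Matrix.vecHead, Matrix.vecTail] <;> ring

lemma M3_pow (b : ℕ) : M3 ^ b = !![1, 0, 0; 0, 1, 0; 0, (b:ℝ), 1] := by
  induction b with
  | zero => simp [Matrix.one_fin_three]
  | succ b ih =>
    rw [pow_succ, ih, M3]
    rw [show ((b+1 : ℕ) : ℝ) = (b:ℝ) + 1 by push_cast; ring]
    ext i j
    fin_cases i <;> fin_cases j <;>
      simp [Matrix.mul_apply, Fin.sum_univ_three, Matrix.vecHead, Matrix.vecTail] <;> ring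

/-- `w_{p,1} = 1 − (p_n + p_n') h_{p,0} > 0` and the one-block identity
`M1^{p_n} M3^{p_n'} M2^{q_n} · (s_{T(p)}, h_{T(p),0}, 1 − s_{T(p)})ᵀ
  = (1/w_{p,1}) · (s_p, h_{p,0}, 1 − s_p)ᵀ`, where `T(p)` is the shift of `p`. -/
theorem stmt6 (n : ℕ) (hn : 0 < n) (P P' Q : Fin n → ℕ) (hI : memI n P P' Q)
    (h0 h0' : ℝ) (hh0 : isH0 n hn P P' Q h0)
    (hh0' : isH0 n hn (P ∘ shiftIdx n hn) (P' ∘ shiftIdx n hn) (Q ∘ shiftIdx n hn) h0') :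
    wseq n hn P P' Q h0 1
        = 1 - ((P ⟨n - 1, Nat.sub_lt hn one_pos⟩ : ℝ)
            + (P' ⟨n - 1, Nat.sub_lt hn one_pos⟩ : ℝ)) * h0 ∧
    0 < wseq n hn P P' Q h0 1 ∧
    (M1 ^ P ⟨n - 1, Nat.sub_lt hn one_pos⟩ * M3 ^ P' ⟨n - 1, Nat.sub_lt hn one_pos⟩
        * M2 ^ Q ⟨n - 1, Nat.sub_lt hn one_pos⟩) *ᵥ
      ![splitRatio n hn (P ∘ shiftIdx n hn) (P' ∘ shiftIdx n hn) (Q ∘ shiftIdx n hn) h0',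
        h0',
        1 - splitRatio n hn (P ∘ shiftIdx n hn) (P' ∘ shiftIdx n hn) (Q ∘ shiftIdx n hn) h0']
      = (1 / wseq n hn P P' Q h0 1) •
        ![splitRatio n hn P P' Q h0, h0, 1 - splitRatio n hn P P' Q h0] := by
  rw [← blk_zero n hn]
  obtain ⟨y, hyH0, hw1pos, hh1y, -⟩ := one_step n hn P P' Q hI h0 hh0
  have hw1ne : wseq n hn P P' Q h0 1 ≠ 0 := ne_of_gt hw1pos
  have hIσ := memI_shift n hn P P' Q hI
  have hy' : h0' = y := cf_fixed_unique _ (aList_ne_nil n hn _ _ _)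
      (aList_entries n hn _ _ _ hIσ) hh0'.1.1 hyH0.1.1 hh0'.2 hyH0.2
  subst hy'
  set a : ℝ := (P (blk n hn 0) : ℝ) with ha
  set b : ℝ := (P' (blk n hn 0) : ℝ) with hb
  set q : ℝ := (Q (blk n hn 0) : ℝ) with hq
  set w1 := wseq n hn P P' Q h0 1 with hw1def
  have hw1eq : w1 = 1 - (a + b) * h0 := by
    rw [hw1def]; simp [wseq, wh]; exact Or.inl rfl
  have hh1def : hseq n hn P P' Q h0 1 = h0 - q * w1 := by
    rw [hw1def]; simp [hseq, wseq, wh]; exact Or.inl rfl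
  have hE1 : h0 = w1 * (q + h0') := by
    rw [hh1def] at hh1y; linarith [hh1y]
  have hs := wh_shift n hn P P' Q h0 h0' hw1ne hh1y
  have hsum := summable_split n hn P P' Q hI h0 hh0
  set s' := splitRatio n hn (P ∘ shiftIdx n hn) (P' ∘ shiftIdx n hn) (Q ∘ shiftIdx n hn) h0'
    with hs'
  set s := splitRatio n hn P P' Q h0 with hsdef
  have hzero : (P (blk n hn 0) : ℝ) * hseq n hn P P' Q h0 0 = a * h0 := by
    simp [hseq, wh, ha]
  have hsucc : ∀ j, (P (blk n hn (j+1)) : ℝ) * hseq n hn P P' Q h0 (j+1)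
      = w1 * (((P ∘ shiftIdx n hn) (blk n hn j) : ℝ)
          * hseq n hn (P ∘ shiftIdx n hn) (P' ∘ shiftIdx n hn) (Q ∘ shiftIdx n hn) h0' j) := by
    intro j
    have hh : hseq n hn (P ∘ shiftIdx n hn) (P' ∘ shiftIdx n hn) (Q ∘ shiftIdx n hn) h0' j
        = hseq n hn P P' Q h0 (j+1) / w1 := by
      simp [hseq, hs j, ← hw1def]
    rw [hh, Function.comp_apply, shiftIdx_blk]
    field_simp
  have hE2 : s = a * h0 + w1 * s' := by
    rw [hsdef, splitRatio, hsum.tsum_eq_zero_add, hzero, tsum_congr hsucc, tsum_mul_left]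
    rfl
  refine ⟨by rw [hw1eq], hw1pos, ?_⟩
  rw [M1_pow, M3_pow, M2_pow]
  funext i
  fin_cases i <;>
    simp [Matrix.mulVec, dotProduct, Fin.sum_univ_three, Matrix.vecHead,
      Matrix.vecTail, Pi.smul_apply, smul_eq_mul] <;>
    field_simp
  · rw [← ha, ← hq]
    linear_combination -hE2 - a * hE1
  · rw [← hq]
    linear_combination -hE1
  · rw [← hb, ← hq]
    linear_combination (-b) * hE1 + hE2 + hw1eq
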